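/- Let α, γ be real non-integers, β real, s₋₋₋ = (1−α−β−γ)/2, s₋₊₋ = (1−α+β−γ)/2, and let σ be a solution of the hypergeometric equation w'' + ((1−α)/z + (1−γ)/(z−1))w' + s₋₋₋s₋₊₋ w/(z(z−1)) = 0. For real numbers a, b, c define K(z) = z^{(1−α)/2}(1−z)^{(1−γ)/2}((a+bz)σ(z) + cz(1−z)σ'(z)). If σ₁, σ₂ are two solutions with Wronskian σ₁σ₂' − σ₁'σ₂ = α z^{α−1}(1−z)^{γ−1}, and K₁, K₂ are the corresponding functions, then K₁K₂' − K₁'K₂ = α·F(z), where F(z) = a(a+cα)(1−z) + (a+b)(a+b−cγ)z − (b+s₋₋₋c)(b+s₋₊₋c)z(1−z). -/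

import Mathlib

open Complex Filter Topology

theorem stmt18 (α β γ a b c : ℝ)
    (hα : ∀ n : ℤ, α ≠ n) (hγ : ∀ n : ℤ, γ ≠ n)
    (S : Set ℂ) (hS : S = {z : ℂ | 0 < z.im})
    (σ₁ σ₂ : ℂ → ℂ)
    (hd₁ : ∀ z ∈ S, DifferentiableAt ℂ σ₁ z ∧ DifferentiableAt ℂ (deriv σ₁) z)
    (hd₂ : ∀ z ∈ S, DifferentiableAt ℂ σ₂ z ∧ DifferentiableAt ℂ (deriv σ₂) z)
    (hode₁ : ∀ z ∈ S, deriv (deriv σ₁) z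
      + ((1 - (α:ℂ))/z + (1 - (γ:ℂ))/(z - 1)) * deriv σ₁ z
      + ((((1-α-β-γ)/2 : ℝ) : ℂ) * (((1-α+β-γ)/2 : ℝ) : ℂ)) * σ₁ z / (z*(z-1)) = 0)
    (hode₂ : ∀ z ∈ S, deriv (deriv σ₂) z
      + ((1 - (α:ℂ))/z + (1 - (γ:ℂ))/(z - 1)) * deriv σ₂ z
      + ((((1-α-β-γ)/2 : ℝ) : ℂ) * (((1-α+β-γ)/2 : ℝ) : ℂ)) * σ₂ z / (z*(z-1)) = 0)
    (hwr : ∀ z ∈ S, σ₁ z * deriv σ₂ z - deriv σ₁ z * σ₂ z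
      = (α:ℂ) * z ^ ((α:ℂ) - 1) * (1 - z) ^ ((γ:ℂ) - 1))
    (K₁ K₂ : ℂ → ℂ)
    (hK₁ : ∀ z, K₁ z = z ^ (((1-α)/2 : ℝ) : ℂ) * (1 - z) ^ (((1-γ)/2 : ℝ) : ℂ) *
      (((a:ℂ) + (b:ℂ)*z) * σ₁ z + (c:ℂ)*z*(1-z) * deriv σ₁ z))
    (hK₂ : ∀ z, K₂ z = z ^ (((1-α)/2 : ℝ) : ℂ) * (1 - z) ^ (((1-γ)/2 : ℝ) : ℂ) *
      (((a:ℂ) + (b:ℂ)*z) * σ₂ z + (c:ℂ)*z*(1-z) * deriv σ₂ z)) :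
    ∀ z ∈ S, K₁ z * deriv K₂ z - deriv K₁ z * K₂ z
      = (α:ℂ) * ((((a*(a+c*α) : ℝ)):ℂ) * (1 - z)
          + (((a+b)*(a+b-c*γ) : ℝ):ℂ) * z
          - ((((b+((1-α-β-γ)/2)*c) * (b+((1-α+β-γ)/2)*c)) : ℝ):ℂ) * z * (1 - z)) := by
  intro z hzS
  have hz : 0 < z.im := by rw [hS] at hzS; exact hzS
  have hz0 : z ≠ 0 := by intro h; rw [h] at hz; simp at hz
  have hz1 : z - 1 ≠ 0 := by
    intro h
    have hz1' : z = 1 := by linear_combination h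
    rw [hz1'] at hz; simp at hz
  have h1z : (1:ℂ) - z ≠ 0 := fun h => hz1 (by linear_combination -h)
  have hzslit : z ∈ Complex.slitPlane := Or.inr (ne_of_gt hz)
  have h1zslit : (1:ℂ) - z ∈ Complex.slitPlane := by
    right
    simp only [Complex.sub_im, Complex.one_im, zero_sub, ne_eq, neg_eq_zero]
    exact ne_of_gt hz
  set p : ℂ := (((1-α)/2 : ℝ) : ℂ) with hp
  set q : ℂ := (((1-γ)/2 : ℝ) : ℂ) with hq
  set s : ℂ := (((1-α-β-γ)/2 : ℝ) : ℂ) with hs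
  set s' : ℂ := (((1-α+β-γ)/2 : ℝ) : ℂ) with hs'
  -- derivative building blocks
  have hds1 : HasDerivAt σ₁ (deriv σ₁ z) z := (hd₁ z hzS).1.hasDerivAt
  have hdd1 : HasDerivAt (deriv σ₁) (deriv (deriv σ₁) z) z := (hd₁ z hzS).2.hasDerivAt
  have hds2 : HasDerivAt σ₂ (deriv σ₂ z) z := (hd₂ z hzS).1.hasDerivAt
  have hdd2 : HasDerivAt (deriv σ₂) (deriv (deriv σ₂) z) z := (hd₂ z hzS).2.hasDerivAt
  have hA : HasDerivAt (fun w : ℂ => (a:ℂ) + (b:ℂ)*w) (b:ℂ) z := by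
    simpa using ((hasDerivAt_id z).const_mul (b:ℂ)).const_add (a:ℂ)
  have hB : HasDerivAt (fun w : ℂ => (c:ℂ)*w*(1-w)) ((c:ℂ)*(1-2*z)) z := by
    have h := (((hasDerivAt_id z).const_mul (c:ℂ)).mul ((hasDerivAt_id z).const_sub 1))
    refine h.congr_deriv ?_
    simp; ring
  have hG₁ : HasDerivAt (fun w => ((a:ℂ)+(b:ℂ)*w) * σ₁ w + (c:ℂ)*w*(1-w) * deriv σ₁ w)
      ((b:ℂ)*σ₁ z + ((a:ℂ)+(b:ℂ)*z)*deriv σ₁ z + (c:ℂ)*(1-2*z)*deriv σ₁ z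
        + (c:ℂ)*z*(1-z)*deriv (deriv σ₁) z) z := by
    have h := (hA.mul hds1).add (hB.mul hdd1)
    refine h.congr_deriv ?_; ring
  have hG₂ : HasDerivAt (fun w => ((a:ℂ)+(b:ℂ)*w) * σ₂ w + (c:ℂ)*w*(1-w) * deriv σ₂ w)
      ((b:ℂ)*σ₂ z + ((a:ℂ)+(b:ℂ)*z)*deriv σ₂ z + (c:ℂ)*(1-2*z)*deriv σ₂ z
        + (c:ℂ)*z*(1-z)*deriv (deriv σ₂) z) z := by
    have h := (hA.mul hds2).add (hB.mul hdd2)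
    refine h.congr_deriv ?_; ring
  have hP : HasDerivAt (fun w : ℂ => w ^ p * (1-w) ^ q)
      ((p * z^(p-1)) * (1-z)^q + z^p * (q * (1-z)^(q-1) * (-1))) z := by
    have h1 : HasDerivAt (fun w : ℂ => w ^ p) (p * z^(p-1) * 1) z :=
      (hasDerivAt_id z).cpow_const hzslit
    have h2 : HasDerivAt (fun w : ℂ => (1-w) ^ q) (q * (1-z)^(q-1) * (-1)) z :=
      ((hasDerivAt_id z).const_sub 1).cpow_const h1zslit
    have := h1.mul h2
    refine this.congr_deriv ?_; ring
  have hK₁' : K₁ = fun w => w ^ p * (1-w) ^ q *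
      (((a:ℂ)+(b:ℂ)*w) * σ₁ w + (c:ℂ)*w*(1-w) * deriv σ₁ w) := funext hK₁
  have hK₂' : K₂ = fun w => w ^ p * (1-w) ^ q *
      (((a:ℂ)+(b:ℂ)*w) * σ₂ w + (c:ℂ)*w*(1-w) * deriv σ₂ w) := funext hK₂
  have hDK₁ : deriv K₁ z
      = ((p * z^(p-1)) * (1-z)^q + z^p * (q * (1-z)^(q-1) * (-1)))
          * (((a:ℂ)+(b:ℂ)*z) * σ₁ z + (c:ℂ)*z*(1-z) * deriv σ₁ z)
        + z ^ p * (1-z) ^ q * ((b:ℂ)*σ₁ z + ((a:ℂ)+(b:ℂ)*z)*deriv σ₁ z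
          + (c:ℂ)*(1-2*z)*deriv σ₁ z + (c:ℂ)*z*(1-z)*deriv (deriv σ₁) z) := by
    rw [hK₁']; exact (hP.mul hG₁).deriv
  have hDK₂ : deriv K₂ z
      = ((p * z^(p-1)) * (1-z)^q + z^p * (q * (1-z)^(q-1) * (-1)))
          * (((a:ℂ)+(b:ℂ)*z) * σ₂ z + (c:ℂ)*z*(1-z) * deriv σ₂ z)
        + z ^ p * (1-z) ^ q * ((b:ℂ)*σ₂ z + ((a:ℂ)+(b:ℂ)*z)*deriv σ₂ z
          + (c:ℂ)*(1-2*z)*deriv σ₂ z + (c:ℂ)*z*(1-z)*deriv (deriv σ₂) z) := by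
    rw [hK₂']; exact (hP.mul hG₂).deriv
  -- cleared ODEs
  have he1 : deriv (deriv σ₁) z * (z*(z-1))
      = -(((1-(α:ℂ))*(z-1) + (1-(γ:ℂ))*z) * deriv σ₁ z) - (s*s') * σ₁ z := by
    have h := hode₁ z hzS
    field_simp at h
    linear_combination h
  have he2 : deriv (deriv σ₂) z * (z*(z-1))
      = -(((1-(α:ℂ))*(z-1) + (1-(γ:ℂ))*z) * deriv σ₂ z) - (s*s') * σ₂ z := by
    have h := hode₂ z hzS
    field_simp at h
    linear_combination h
  -- the Wronskian of the G's
  set X : ℂ := ((a:ℂ)+(b:ℂ)*z)^2 + ((a:ℂ)+(b:ℂ)*z)*(c:ℂ)*(1-2*z)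
      - ((a:ℂ)+(b:ℂ)*z)*(c:ℂ)*((1-(α:ℂ))*(1-z)-(1-(γ:ℂ))*z)
      - (b:ℂ)*(c:ℂ)*z*(1-z) - (c:ℂ)^2*(s*s')*z*(1-z) with hX
  have hGW : (((a:ℂ)+(b:ℂ)*z) * σ₁ z + (c:ℂ)*z*(1-z) * deriv σ₁ z)
        * ((b:ℂ)*σ₂ z + ((a:ℂ)+(b:ℂ)*z)*deriv σ₂ z + (c:ℂ)*(1-2*z)*deriv σ₂ z
          + (c:ℂ)*z*(1-z)*deriv (deriv σ₂) z)
      - ((b:ℂ)*σ₁ z + ((a:ℂ)+(b:ℂ)*z)*deriv σ₁ z + (c:ℂ)*(1-2*z)*deriv σ₁ z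
          + (c:ℂ)*z*(1-z)*deriv (deriv σ₁) z)
        * (((a:ℂ)+(b:ℂ)*z) * σ₂ z + (c:ℂ)*z*(1-z) * deriv σ₂ z)
      = X * (σ₁ z * deriv σ₂ z - deriv σ₁ z * σ₂ z) := by
    linear_combination
      (-(c:ℂ) * (((a:ℂ)+(b:ℂ)*z) * σ₁ z + (c:ℂ)*z*(1-z) * deriv σ₁ z)) * he2
      + ((c:ℂ) * (((a:ℂ)+(b:ℂ)*z) * σ₂ z + (c:ℂ)*z*(1-z) * deriv σ₂ z)) * he1
  -- power combinations
  have hpp : p + p = 1 - (α:ℂ) := by rw [hp]; push_cast; ring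
  have hqq : q + q = 1 - (γ:ℂ) := by rw [hq]; push_cast; ring
  have hPP : (z^p*(1-z)^q) * (z^p*(1-z)^q) = z^(1-(α:ℂ)) * (1-z)^(1-(γ:ℂ)) := by
    rw [mul_mul_mul_comm, ← Complex.cpow_add _ _ hz0, ← Complex.cpow_add _ _ h1z, hpp, hqq]
  have hQW : z^(1-(α:ℂ)) * (1-z)^(1-(γ:ℂ)) * ((α:ℂ) * z^((α:ℂ)-1) * (1-z)^((γ:ℂ)-1))
      = (α:ℂ) := by
    rw [show z^(1-(α:ℂ)) * (1-z)^(1-(γ:ℂ)) * ((α:ℂ) * z^((α:ℂ)-1) * (1-z)^((γ:ℂ)-1))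
        = (α:ℂ) * (z^(1-(α:ℂ)) * z^((α:ℂ)-1)) * ((1-z)^(1-(γ:ℂ)) * (1-z)^((γ:ℂ)-1)) by ring,
      ← Complex.cpow_add _ _ hz0, ← Complex.cpow_add _ _ h1z,
      show (1-(α:ℂ)) + ((α:ℂ)-1) = 0 by ring, show (1-(γ:ℂ)) + ((γ:ℂ)-1) = 0 by ring,
      Complex.cpow_zero, Complex.cpow_zero, mul_one, mul_one]
  -- assemble
  have hmain : K₁ z * deriv K₂ z - deriv K₁ z * K₂ z
      = (z^p*(1-z)^q) * (z^p*(1-z)^q)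
        * ((((a:ℂ)+(b:ℂ)*z) * σ₁ z + (c:ℂ)*z*(1-z) * deriv σ₁ z)
            * ((b:ℂ)*σ₂ z + ((a:ℂ)+(b:ℂ)*z)*deriv σ₂ z + (c:ℂ)*(1-2*z)*deriv σ₂ z
              + (c:ℂ)*z*(1-z)*deriv (deriv σ₂) z)
          - ((b:ℂ)*σ₁ z + ((a:ℂ)+(b:ℂ)*z)*deriv σ₁ z + (c:ℂ)*(1-2*z)*deriv σ₁ z
              + (c:ℂ)*z*(1-z)*deriv (deriv σ₁) z)
            * (((a:ℂ)+(b:ℂ)*z) * σ₂ z + (c:ℂ)*z*(1-z) * deriv σ₂ z)) := by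
    rw [hK₁ z, hK₂ z, hDK₁, hDK₂]; ring
  rw [hmain, hGW, hPP, hwr z hzS,
    show z ^ (1 - (α:ℂ)) * (1 - z) ^ (1 - (γ:ℂ)) * (X * ((α:ℂ) * z ^ ((α:ℂ) - 1) * (1 - z) ^ ((γ:ℂ) - 1)))
      = X * (z^(1-(α:ℂ)) * (1-z)^(1-(γ:ℂ)) * ((α:ℂ) * z^((α:ℂ)-1) * (1-z)^((γ:ℂ)-1))) by ring,
    hQW, hX, hs, hs']
  push_cast
  ring
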